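/- Let ξ ∈ ℝ³ with ξ ≠ 0 and let x ∈ ℝ³ be such that x ≠ −tξ for every t ≥ 0. Then the function t ↦ ⟨A(x + tξ), ξ⟩ is integrable on [0,∞), and the outgoing phase Φ₊(x,ξ) := −∫₀^∞ ⟨A(x + tξ), ξ⟩ dt satisfies Φ₊(x,ξ) = ∫_{φ_ξ}^{φ_x} a(φ) dφ, where φ_ξ = arccos(ξ₃/|ξ|). -/

import Mathlib

open Real MeasureTheory Filter
open scoped RealInnerProductSpace Topology

noncomputable section

/-- `ℝ³` as a Euclidean space. -/
abbrev E3 := EuclideanSpace ℝ (Fin 3)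

/-- The colatitude `φ_x = arccos(x₃/|x|)` of a point of `ℝ³`. -/
def colat (x : E3) : ℝ := Real.arccos (x 2 / ‖x‖)

/-- The unit vector `e_{φ_x}` of spherical coordinates. -/
def ephi (x : E3) : E3 :=
  (1 / ‖x‖) • (WithLp.equiv 2 (Fin 3 → ℝ)).symm
    ![x 0 * x 2 / Real.sqrt ((x 0)^2 + (x 1)^2),
      x 1 * x 2 / Real.sqrt ((x 0)^2 + (x 1)^2),
      - Real.sqrt ((x 0)^2 + (x 1)^2)]

/-- The magnetic potential `A(x) = (a(φ_x)/|x|) e_{φ_x}` (set to `0` on the `x₃`-axis). -/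
def magA (a : ℝ → ℝ) (x : E3) : E3 :=
  if 0 < (x 0)^2 + (x 1)^2 then (a (colat x) / ‖x‖) • ephi x else 0

/-! ### Auxiliary lemmas -/

lemma inner3 (u v : E3) : ⟪u,v⟫ = u 0 * v 0 + u 1 * v 1 + u 2 * v 2 := by
  simp [PiLp.inner_apply, Fin.sum_univ_three, mul_comm]

lemma normsq3 (u : E3) : ‖u‖^2 = (u 0)^2 + (u 1)^2 + (u 2)^2 := by
  rw [EuclideanSpace.norm_eq, Real.sq_sqrt (by positivity)]
  simp [Fin.sum_univ_three, sq_abs]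

lemma norm_eq_sqrt3 (u : E3) : ‖u‖ = Real.sqrt ((u 0)^2 + (u 1)^2 + (u 2)^2) := by
  rw [← normsq3, Real.sqrt_sq (norm_nonneg u)]

/-- scalar coordinate helpers along the line `t ↦ x + t ξ` -/
def qf (x ξ : E3) (t : ℝ) : ℝ :=
  (x 0 + t*ξ 0)^2 + (x 1 + t*ξ 1)^2 + (x 2 + t*ξ 2)^2
def r2f (x ξ : E3) (t : ℝ) : ℝ := (x 0 + t*ξ 0)^2 + (x 1 + t*ξ 1)^2
def cf (x ξ : E3) (t : ℝ) : ℝ := (x 2 + t*ξ 2) / Real.sqrt (qf x ξ t)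
def phif (x ξ : E3) (t : ℝ) : ℝ := Real.arccos (cf x ξ t)
def Gf (a : ℝ → ℝ) (s : ℝ) : ℝ := ∫ u in (0:ℝ)..s, a u
def Numf (x ξ : E3) (t : ℝ) : ℝ :=
  (x 2 + t*ξ 2) * ((x 0 + t*ξ 0)*ξ 0 + (x 1 + t*ξ 1)*ξ 1 + (x 2 + t*ξ 2)*ξ 2)
    - ξ 2 * qf x ξ t

lemma coord_apply (x ξ : E3) (t : ℝ) (i : Fin 3) : (x + t • ξ) i = x i + t * ξ i := rfl

lemma norm_line (x ξ : E3) (t : ℝ) : ‖x + t • ξ‖ = Real.sqrt (qf x ξ t) := by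
  rw [norm_eq_sqrt3]; rfl

lemma normsq_line (x ξ : E3) (t : ℝ) : ‖x + t • ξ‖^2 = qf x ξ t := normsq3 _

lemma colat_line (x ξ : E3) (t : ℝ) : colat (x + t • ξ) = phif x ξ t := by
  rw [colat, norm_line]; rfl

lemma qf_eq (x ξ : E3) (t : ℝ) : qf x ξ t = r2f x ξ t + (x 2 + t*ξ 2)^2 := rfl

lemma magA_inner (a : ℝ → ℝ) (ξ y : E3) (hy : y ≠ 0) :
    ⟪magA a y, ξ⟫ =
      a (colat y) * (y 2 * ⟪y, ξ⟫ - ξ 2 * ‖y‖^2) / (‖y‖^2 * Real.sqrt ((y 0)^2 + (y 1)^2)) := by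
  have hn : 0 < ‖y‖ := norm_pos_iff.mpr hy
  by_cases hr : 0 < (y 0)^2 + (y 1)^2
  · have hs : 0 < Real.sqrt ((y 0)^2 + (y 1)^2) := Real.sqrt_pos.mpr hr
    have hs2 : (Real.sqrt ((y 0)^2 + (y 1)^2))^2 = (y 0)^2 + (y 1)^2 := Real.sq_sqrt hr.le
    have hn2 : ‖y‖^2 = (y 0)^2 + (y 1)^2 + (y 2)^2 := normsq3 y
    rw [magA, if_pos hr, inner_smul_left]
    rw [inner3, inner3]
    simp only [ephi, PiLp.smul_apply, smul_eq_mul]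
    simp only [WithLp.equiv_symm_apply, PiLp.toLp_apply, Matrix.cons_val_zero, Matrix.cons_val_one,
      Matrix.head_cons, Matrix.cons_val_two, Matrix.tail_cons]
    have h1 : RCLike.re (starRingEnd ℝ (a (colat y) / ‖y‖)) = a (colat y) / ‖y‖ := by simp
    simp only [starRingEnd_apply, star_trivial]
    field_simp
    linear_combination (a (colat y) * ξ 2) * hn2 -
      (a (colat y) * ξ 2) * hs2
  · have hr0 : (y 0)^2 + (y 1)^2 = 0 := le_antisymm (not_lt.mp hr) (by positivity)
    rw [magA, if_neg hr, hr0, Real.sqrt_zero, mul_zero, div_zero]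
    simp

lemma magA_inner_line (a : ℝ → ℝ) (x ξ : E3) (t : ℝ) (hy : x + t • ξ ≠ 0) :
    ⟪magA a (x + t • ξ), ξ⟫ =
      a (phif x ξ t) * Numf x ξ t / (qf x ξ t * Real.sqrt (r2f x ξ t)) := by
  rw [magA_inner a ξ _ hy, colat_line, normsq_line, inner3]
  rfl

lemma hasDerivAt_line (a : ℝ → ℝ) (hcont : Continuous a) (x ξ : E3) (t : ℝ)
    (hq : 0 < qf x ξ t) (hr : 0 < r2f x ξ t) :
    HasDerivAt (fun s => Gf a (phif x ξ s))
      (a (phif x ξ t) * Numf x ξ t / (qf x ξ t * Real.sqrt (r2f x ξ t))) t := by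
  have hsq : 0 < Real.sqrt (qf x ξ t) := Real.sqrt_pos.mpr hq
  have hsr : 0 < Real.sqrt (r2f x ξ t) := Real.sqrt_pos.mpr hr
  have hq2 : (Real.sqrt (qf x ξ t))^2 = qf x ξ t := Real.sq_sqrt hq.le
  have hr2 : (Real.sqrt (r2f x ξ t))^2 = r2f x ξ t := Real.sq_sqrt hr.le
  have h0 : HasDerivAt (fun s : ℝ => x 0 + s * ξ 0) (ξ 0) t := by
    simpa using (hasDerivAt_mul_const (ξ 0)).const_add (x 0)
  have h1 : HasDerivAt (fun s : ℝ => x 1 + s * ξ 1) (ξ 1) t := by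
    simpa using (hasDerivAt_mul_const (ξ 1)).const_add (x 1)
  have h2 : HasDerivAt (fun s : ℝ => x 2 + s * ξ 2) (ξ 2) t := by
    simpa using (hasDerivAt_mul_const (ξ 2)).const_add (x 2)
  have hq' : HasDerivAt (qf x ξ)
      (2*((x 0 + t*ξ 0)*ξ 0 + (x 1 + t*ξ 1)*ξ 1 + (x 2 + t*ξ 2)*ξ 2)) t := by
    have := ((h0.pow 2).add (h1.pow 2)).add (h2.pow 2)
    refine HasDerivAt.congr_deriv this ?_
    ring
  have hsqrt : HasDerivAt (fun s => Real.sqrt (qf x ξ s))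
      (1 / (2 * Real.sqrt (qf x ξ t)) *
        (2*((x 0 + t*ξ 0)*ξ 0 + (x 1 + t*ξ 1)*ξ 1 + (x 2 + t*ξ 2)*ξ 2))) t :=
    (Real.hasDerivAt_sqrt hq.ne').comp t hq'
  have hc : HasDerivAt (cf x ξ)
      ((ξ 2 * Real.sqrt (qf x ξ t) - (x 2 + t*ξ 2) *
          (1 / (2 * Real.sqrt (qf x ξ t)) *
            (2*((x 0 + t*ξ 0)*ξ 0 + (x 1 + t*ξ 1)*ξ 1 + (x 2 + t*ξ 2)*ξ 2)))) /
        (Real.sqrt (qf x ξ t))^2) t := h2.div hsqrt hsq.ne'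
  have hz2 : (x 2 + t*ξ 2)^2 < qf x ξ t := by
    have := qf_eq x ξ t; linarith
  have habs : |cf x ξ t| < 1 := by
    rw [cf, abs_div, abs_of_nonneg (Real.sqrt_nonneg _), div_lt_one hsq,
      ← Real.sqrt_sq_eq_abs]
    exact Real.sqrt_lt_sqrt (sq_nonneg _) hz2
  have hne1 : cf x ξ t ≠ 1 := fun h => by simp [h] at habs
  have hnem1 : cf x ξ t ≠ -1 := fun h => by simp [h] at habs
  have hφ := (Real.hasDerivAt_arccos hnem1 hne1).comp t hc
  have hG : HasDerivAt (Gf a) (a (phif x ξ t)) (phif x ξ t) :=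
    (hcont.integral_hasStrictDerivAt 0 (phif x ξ t)).hasDerivAt
  have htot := hG.comp t hφ
  refine htot.congr_deriv ?_
  have hc2 : 1 - (cf x ξ t)^2 = r2f x ξ t / qf x ξ t := by
    rw [cf, div_pow, hq2]
    field_simp
    linarith [qf_eq x ξ t]
  rw [hc2, Real.sqrt_div hr.le]
  simp only [Numf]
  set S := Real.sqrt (qf x ξ t) with hS
  set R := Real.sqrt (r2f x ξ t) with hR
  rw [← hq2]
  field_simp
  ring

lemma exists_delta (a : ℝ → ℝ) (hsupp : tsupport a ⊆ Set.Ioo 0 Real.pi) :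
    ∃ δ > 0, (∀ s, s < δ → a s = 0) ∧ (∀ s, Real.pi - δ < s → a s = 0) := by
  have h0 : (0:ℝ) ∉ tsupport a := fun h => lt_irrefl 0 (hsupp h).1
  have hπ : Real.pi ∉ tsupport a := fun h => lt_irrefl Real.pi (hsupp h).2
  have hop : IsOpen (tsupport a)ᶜ := (isClosed_tsupport a).isOpen_compl
  obtain ⟨δ₁, hδ₁, hb₁⟩ := Metric.isOpen_iff.mp hop 0 h0
  obtain ⟨δ₂, hδ₂, hb₂⟩ := Metric.isOpen_iff.mp hop Real.pi hπ
  refine ⟨min δ₁ δ₂, lt_min hδ₁ hδ₂, ?_, ?_⟩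
  · intro s hs
    apply image_eq_zero_of_notMem_tsupport
    intro hmem
    have h01 := hsupp hmem
    have : s ∈ Metric.ball (0:ℝ) δ₁ := by
      rw [Metric.mem_ball, Real.dist_eq, sub_zero, abs_of_pos h01.1]
      exact lt_of_lt_of_le hs (min_le_left _ _)
    exact hb₁ this hmem
  · intro s hs
    apply image_eq_zero_of_notMem_tsupport
    intro hmem
    have h01 := hsupp hmem
    have : s ∈ Metric.ball Real.pi δ₂ := by
      rw [Metric.mem_ball, Real.dist_eq, abs_of_neg (by linarith [h01.2])]
      have := min_le_right δ₁ δ₂; linarith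
    exact hb₂ this hmem

/-- For `ξ ≠ 0` and `x` not on the incoming ray `{−tξ : t ≥ 0}`, the function
`t ↦ ⟨A(x + tξ), ξ⟫` is integrable on `[0,∞)` and the outgoing phase
`Φ₊(x,ξ) = −∫₀^∞ ⟨A(x+tξ), ξ⟩ dt` equals `∫_{φ_ξ}^{φ_x} a(φ) dφ`. -/
theorem outgoing_phase_eq (a : ℝ → ℝ) (ha : ContDiff ℝ (⊤ : ℕ∞) a)
    (hpos : ∀ t, 0 ≤ a t) (hcs : HasCompactSupport a)
    (hsupp : tsupport a ⊆ Set.Ioo 0 Real.pi)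
    (ξ x : E3) (hξ : ξ ≠ 0) (hx : ∀ t : ℝ, 0 ≤ t → x ≠ -(t • ξ)) :
    IntegrableOn (fun t : ℝ => ⟪magA a (x + t • ξ), ξ⟫) (Set.Ici 0) ∧
    -(∫ t in Set.Ici (0:ℝ), ⟪magA a (x + t • ξ), ξ⟫) = ∫ φ in (colat ξ)..(colat x), a φ := by
  have hconta : Continuous a := ha.continuous
  obtain ⟨δ, hδpos, hδ0, hδπ⟩ := exists_delta a hsupp
  set h : ℝ → ℝ := fun t : ℝ => ⟪magA a (x + t • ξ), ξ⟫ with hh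
  set g : ℝ → ℝ := fun t : ℝ => Gf a (phif x ξ t) with hg
  -- the line never hits the origin for `t ≥ 0`
  have hxline : ∀ t : ℝ, 0 ≤ t → x + t • ξ ≠ 0 := by
    intro t ht hc
    exact hx t ht (eq_neg_of_add_eq_zero_left hc)
  have hqpos : ∀ t : ℝ, x + t • ξ ≠ 0 → 0 < qf x ξ t := by
    intro t ht
    have h1 : 0 < ‖x + t • ξ‖ := norm_pos_iff.mpr ht
    have h2 := normsq_line x ξ t
    nlinarith
  have hqcont : Continuous (qf x ξ) := by unfold qf; fun_prop
  have hr2cont : Continuous (r2f x ξ) := by unfold r2f; fun_prop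
  have hφcont : ∀ t : ℝ, 0 < qf x ξ t → ContinuousAt (phif x ξ) t := by
    intro t hq
    apply Real.continuous_arccos.continuousAt.comp
    exact (continuousAt_const.add (continuousAt_id.mul continuousAt_const)).div
      ((Real.continuous_sqrt.continuousAt).comp hqcont.continuousAt)
      (Real.sqrt_pos.mpr hq).ne'
  have hGderiv : ∀ s : ℝ, HasDerivAt (Gf a) (a s) s := fun s =>
    (hconta.integral_hasStrictDerivAt 0 s).hasDerivAt
  have hGcont : Continuous (Gf a) :=
    continuous_iff_continuousAt.mpr (fun s => (hGderiv s).continuousAt)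
  have haint : ∀ u v : ℝ, IntervalIntegrable a volume u v := fun u v =>
    hconta.intervalIntegrable u v
  have hphimem : ∀ t : ℝ, phif x ξ t ∈ Set.Icc 0 Real.pi := fun t =>
    ⟨Real.arccos_nonneg _, Real.arccos_le_pi _⟩
  -- behaviour near an axis point
  have haxis : ∀ t : ℝ, x + t • ξ ≠ 0 → ¬ (0 < r2f x ξ t) →
      (∀ᶠ s in 𝓝 t, a (phif x ξ s) = 0) ∧ (∀ᶠ s in 𝓝 t, g s = g t) := by
    intro t hyt hr
    have hq := hqpos t hyt
    have hr0 : r2f x ξ t = 0 := le_antisymm (not_lt.mp hr) (by unfold r2f; positivity)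
    have hz2 : (x 2 + t*ξ 2)^2 = qf x ξ t := by rw [qf_eq, hr0, zero_add]
    have hz : x 2 + t*ξ 2 ≠ 0 := by
      intro h0; rw [h0] at hz2; simp at hz2; linarith [hz2 ▸ hq]
    have hct : cf x ξ t = 1 ∨ cf x ξ t = -1 := by
      rcases lt_or_gt_of_ne hz with hneg | hpos'
      · right
        rw [cf, ← hz2, Real.sqrt_sq_eq_abs, abs_of_neg hneg]
        rw [div_eq_iff (by linarith : -(x 2 + t * ξ 2) ≠ 0)]
        ring
      · left
        rw [cf, ← hz2, Real.sqrt_sq_eq_abs, abs_of_pos hpos']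
        rw [div_eq_iff (by linarith : (x 2 + t * ξ 2) ≠ 0)]
        ring
    have hφt : phif x ξ t = 0 ∨ phif x ξ t = Real.pi := by
      rcases hct with h1 | h1
      · left; rw [phif, h1, Real.arccos_one]
      · right; rw [phif, h1, Real.arccos_neg_one]
    have hev : ∀ᶠ s in 𝓝 t, |phif x ξ s - phif x ξ t| < δ := by
      have := (hφcont t hq).tendsto
      have hball := this (Metric.ball_mem_nhds (phif x ξ t) hδpos)
      filter_upwards [hball] with s hs
      simpa [Real.dist_eq] using hs
    have hA : ∀ s : ℝ, |phif x ξ s - phif x ξ t| < δ → a (phif x ξ s) = 0 := by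
      intro s hs
      rcases hφt with h1 | h1
      · apply hδ0
        rw [h1, sub_zero] at hs
        calc phif x ξ s ≤ |phif x ξ s| := le_abs_self _
        _ < δ := hs
      · apply hδπ
        rw [h1] at hs
        have := neg_lt_of_abs_lt hs
        linarith
    refine ⟨hev.mono hA, hev.mono ?_⟩
    intro s hs
    have hzero : ∫ u in (phif x ξ t)..(phif x ξ s), a u = 0 := by
      rw [intervalIntegral.integral_congr (g := fun _ => (0:ℝ)), intervalIntegral.integral_zero]
      intro u hu
      rw [Set.mem_uIcc] at hu
      rcases hφt with h1 | h1
      · apply hδ0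
        have hs'' : |phif x ξ s - 0| < δ := by rw [← h1]; exact hs
        rw [sub_zero] at hs''
        have hs' : phif x ξ s < δ := lt_of_le_of_lt (le_abs_self _) hs''
        rcases hu with ⟨h2, h3⟩ | ⟨h2, h3⟩ <;> linarith [h1, hδpos]
      · apply hδπ
        have hs'' : |phif x ξ s - Real.pi| < δ := by rw [← h1]; exact hs
        have hs' : Real.pi - δ < phif x ξ s := by
          have := neg_lt_of_abs_lt hs''; linarith
        rcases hu with ⟨h2, h3⟩ | ⟨h2, h3⟩ <;> linarith [h1, hδpos]
    have hsub := intervalIntegral.integral_interval_sub_left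
      (haint 0 (phif x ξ s)) (haint 0 (phif x ξ t))
    simp only [hg, Gf]
    rw [← sub_eq_zero]
    rw [hsub, hzero]
  -- derivative of `g` everywhere on the ray
  have hgderiv : ∀ t : ℝ, x + t • ξ ≠ 0 → HasDerivAt g (h t) t := by
    intro t ht
    rw [hh]
    simp only
    rw [magA_inner_line a x ξ t ht]
    by_cases hr : 0 < r2f x ξ t
    · exact hasDerivAt_line a hconta x ξ t (hqpos t ht) hr
    · have h0 : Real.sqrt (r2f x ξ t) = 0 := by
        have hr0 : r2f x ξ t = 0 := le_antisymm (not_lt.mp hr) (by unfold r2f; positivity)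
        rw [hr0, Real.sqrt_zero]
      rw [h0, mul_zero, div_zero]
      obtain ⟨_, hgc⟩ := haxis t ht hr
      exact (hasDerivAt_const t (g t)).congr_of_eventuallyEq hgc
  -- continuity of the integrand along the ray
  have hycont : Continuous (fun t : ℝ => x + t • ξ) := by fun_prop
  have hconth : ∀ t : ℝ, x + t • ξ ≠ 0 → ContinuousAt h t := by
    intro t ht
    have hevne : ∀ᶠ s in 𝓝 t, x + s • ξ ≠ 0 := by
      have : ∀ᶠ z in 𝓝 (x + t • ξ), z ≠ 0 := eventually_ne_nhds ht
      exact (hycont.continuousAt (x := t)).eventually this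
    by_cases hr : 0 < r2f x ξ t
    · have hq := hqpos t ht
      have hF : ContinuousAt
          (fun s => a (phif x ξ s) * Numf x ξ s / (qf x ξ s * Real.sqrt (r2f x ξ s))) t := by
        apply ContinuousAt.div
        · exact (hconta.continuousAt.comp (hφcont t hq)).mul (by unfold Numf qf; fun_prop)
        · exact hqcont.continuousAt.mul
            ((Real.continuous_sqrt.continuousAt).comp hr2cont.continuousAt)
        · exact (mul_pos hq (Real.sqrt_pos.mpr hr)).ne'
      apply hF.congr
      filter_upwards [hevne] with s hs
      exact (magA_inner_line a x ξ s hs).symm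
    · obtain ⟨hev0, _⟩ := haxis t ht hr
      refine ContinuousAt.congr (f := fun _ => (0:ℝ)) continuousAt_const ?_
      filter_upwards [hevne, hev0] with s hs ha0
      show (0:ℝ) = h s
      rw [hh]
      simp only
      rw [magA_inner_line a x ξ s hs, ha0, zero_mul, zero_div]
  -- the limit of the colatitude along the ray
  have hnormξ : ‖ξ‖ ≠ 0 := norm_ne_zero_iff.mpr hξ
  have hcf_lim : Tendsto (cf x ξ) atTop (𝓝 (ξ 2 / ‖ξ‖)) := by
    have hw : ∀ i : Fin 3, Tendsto (fun t : ℝ => x i / t + ξ i) atTop (𝓝 (ξ i)) := by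
      intro i
      have h1 : Tendsto (fun t : ℝ => x i / t) atTop (𝓝 0) :=
        Tendsto.div_atTop tendsto_const_nhds tendsto_id
      simpa using h1.add tendsto_const_nhds
    have hden : Tendsto (fun t : ℝ =>
        Real.sqrt ((x 0/t + ξ 0)^2 + (x 1/t + ξ 1)^2 + (x 2/t + ξ 2)^2)) atTop (𝓝 ‖ξ‖) := by
      rw [norm_eq_sqrt3]
      exact ((((hw 0).pow 2).add ((hw 1).pow 2)).add ((hw 2).pow 2)).sqrt
    have hmain : Tendsto (fun t : ℝ => (x 2/t + ξ 2) /
        Real.sqrt ((x 0/t + ξ 0)^2 + (x 1/t + ξ 1)^2 + (x 2/t + ξ 2)^2)) atTop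
        (𝓝 (ξ 2 / ‖ξ‖)) := (hw 2).div hden hnormξ
    apply hmain.congr'
    filter_upwards [eventually_gt_atTop (0:ℝ)] with t ht
    have ht' : t ≠ 0 := ht.ne'
    have hqq : (x 0/t + ξ 0)^2 + (x 1/t + ξ 1)^2 + (x 2/t + ξ 2)^2 = qf x ξ t / t^2 := by
      rw [qf]; field_simp
    rw [hqq, Real.sqrt_div (by unfold qf; positivity), Real.sqrt_sq ht.le]
    rw [cf]
    rcases eq_or_ne (Real.sqrt (qf x ξ t)) 0 with h0 | h0
    · rw [h0]; simp
    · field_simp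
  have hφ_lim : Tendsto (phif x ξ) atTop (𝓝 (colat ξ)) := by
    have : colat ξ = Real.arccos (ξ 2 / ‖ξ‖) := rfl
    rw [this]
    exact (Real.continuous_arccos.continuousAt.tendsto).comp hcf_lim
  have hg_lim : Tendsto g atTop (𝓝 (Gf a (colat ξ))) :=
    (hGcont.continuousAt.tendsto).comp hφ_lim
  -- eventual sign of the numerator
  have hNum : ∀ t : ℝ, Numf x ξ t =
      (x 2 * (x 0 * ξ 0 + x 1 * ξ 1 + x 2 * ξ 2) - ξ 2 * ((x 0)^2 + (x 1)^2 + (x 2)^2))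
        + t * (x 2 * ((ξ 0)^2 + (ξ 1)^2 + (ξ 2)^2)
          - ξ 2 * (x 0 * ξ 0 + x 1 * ξ 1 + x 2 * ξ 2)) := by
    intro t; simp only [Numf, qf]; ring
  set A0 : ℝ := x 2 * (x 0 * ξ 0 + x 1 * ξ 1 + x 2 * ξ 2)
      - ξ 2 * ((x 0)^2 + (x 1)^2 + (x 2)^2) with hA0
  set B0 : ℝ := x 2 * ((ξ 0)^2 + (ξ 1)^2 + (ξ 2)^2)
      - ξ 2 * (x 0 * ξ 0 + x 1 * ξ 1 + x 2 * ξ 2) with hB0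
  have hsign : ∃ T : ℝ, 0 ≤ T ∧
      ((∀ t, T ≤ t → 0 ≤ Numf x ξ t) ∨ (∀ t, T ≤ t → Numf x ξ t ≤ 0)) := by
    rcases lt_trichotomy B0 0 with hB | hB | hB
    · refine ⟨max 0 ((-A0)/B0), le_max_left _ _, Or.inr (fun t ht => ?_)⟩
      rw [hNum t]
      have h1 : (-A0)/B0 ≤ t := le_trans (le_max_right _ _) ht
      have h2 : t * B0 ≤ ((-A0)/B0) * B0 := by
        apply mul_le_mul_of_nonpos_right h1 hB.le
      rw [div_mul_cancel₀ _ hB.ne] at h2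
      linarith
    · rcases le_or_gt 0 A0 with hA | hA
      · refine ⟨0, le_refl _, Or.inl (fun t ht => ?_)⟩
        rw [hNum t, hB]; linarith
      · refine ⟨0, le_refl _, Or.inr (fun t ht => ?_)⟩
        rw [hNum t, hB]; linarith
    · refine ⟨max 0 ((-A0)/B0), le_max_left _ _, Or.inl (fun t ht => ?_)⟩
      rw [hNum t]
      have h1 : (-A0)/B0 ≤ t := le_trans (le_max_right _ _) ht
      have h2 : ((-A0)/B0) * B0 ≤ t * B0 := mul_le_mul_of_nonneg_right h1 hB.le
      rw [div_mul_cancel₀ _ hB.ne'] at h2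
      linarith
  obtain ⟨T, hT0, hTsign⟩ := hsign
  -- sign of the integrand beyond T
  have hhsign : (∀ t, T ≤ t → 0 ≤ h t) ∨ (∀ t, T ≤ t → h t ≤ 0) := by
    rcases hTsign with hs | hs
    · left
      intro t ht
      rw [hh]; simp only
      rw [magA_inner_line a x ξ t (hxline t (le_trans hT0 ht))]
      apply div_nonneg (mul_nonneg (hpos _) (hs t ht))
      have := Real.sqrt_nonneg (r2f x ξ t)
      have := (hqpos t (hxline t (le_trans hT0 ht))).le
      positivity
    · right
      intro t ht
      rw [hh]; simp only
      rw [magA_inner_line a x ξ t (hxline t (le_trans hT0 ht))]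
      apply div_nonpos_of_nonpos_of_nonneg
        (mul_nonpos_of_nonneg_of_nonpos (hpos _) (hs t ht))
      have := Real.sqrt_nonneg (r2f x ξ t)
      have := (hqpos t (hxline t (le_trans hT0 ht))).le
      positivity
  -- integrability
  have hderivIciT : ∀ t ∈ Set.Ici T, HasDerivAt g (h t) t := fun t ht =>
    hgderiv t (hxline t (le_trans hT0 ht))
  have hI2 : IntegrableOn h (Set.Ioi T) := by
    rcases hhsign with hs | hs
    · exact integrableOn_Ioi_deriv_of_nonneg' hderivIciT
        (fun t ht => hs t (le_of_lt ht)) hg_lim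
    · exact integrableOn_Ioi_deriv_of_nonpos' hderivIciT
        (fun t ht => hs t (le_of_lt ht)) hg_lim
  have hI1 : IntegrableOn h (Set.Icc 0 T) := by
    apply ContinuousOn.integrableOn_Icc
    intro t ht
    exact (hconth t (hxline t ht.1)).continuousWithinAt
  have hItot : IntegrableOn h (Set.Ici 0) := by
    have hsub : Set.Ici (0:ℝ) ⊆ Set.Icc 0 T ∪ Set.Ioi T := by
      intro t ht
      rcases le_or_gt t T with h1 | h1
      · exact Or.inl ⟨ht, h1⟩
      · exact Or.inr h1
    exact (hI1.union hI2).mono_set hsub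
  refine ⟨hItot, ?_⟩
  -- evaluation of the integral
  have hval : ∫ t in Set.Ioi (0:ℝ), h t = Gf a (colat ξ) - g 0 :=
    integral_Ioi_of_hasDerivAt_of_tendsto'
      (fun t ht => hgderiv t (hxline t ht))
      (hItot.mono_set Set.Ioi_subset_Ici_self) hg_lim
  have hg0 : g 0 = Gf a (colat x) := by
    rw [hg]
    simp only
    rw [← colat_line x ξ 0]
    norm_num
  have hrhs : ∫ φ in (colat ξ)..(colat x), a φ = Gf a (colat x) - Gf a (colat ξ) := by
    rw [Gf, Gf, intervalIntegral.integral_interval_sub_left (haint 0 (colat x))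
      (haint 0 (colat ξ))]
  rw [integral_Ici_eq_integral_Ioi]
  rw [show (∫ t in Set.Ioi (0:ℝ), ⟪magA a (x + t • ξ), ξ⟫) = ∫ t in Set.Ioi (0:ℝ), h t from rfl]
  rw [hval, hg0, hrhs]
  ring
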